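/- Let ν̄ > 0 and η ∈ ℝ, and let Γ(y) = (e^{η/ν̄} − 1) e^{−y²} / ( √π + (e^{η/ν̄} − 1) ∫_y^{∞} e^{−ξ²} dξ ). Then for all y ∈ ℝ, |Γ(y)| ≤ π^{−1/2} (e^{|η|/ν̄} − 1) e^{|η|/ν̄} e^{−y²}. -/

import Mathlib

open MeasureTheory

/-- Pointwise Gaussian bound for the Hopf–Cole diffusion-wave profile `Γ`. -/
theorem hopf_cole_profile_pointwise_bound (nu η : ℝ) (hnu : 0 < nu)
    (Γ : ℝ → ℝ)
    (hΓ : ∀ y : ℝ, Γ y =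
      (Real.exp (η / nu) - 1) * Real.exp (-y ^ 2) /
        (Real.sqrt Real.pi +
          (Real.exp (η / nu) - 1) * ∫ ξ in Set.Ioi y, Real.exp (-ξ ^ 2))) :
    ∀ y : ℝ,
      |Γ y| ≤ Real.pi ^ (-(1 : ℝ) / 2) * (Real.exp (|η| / nu) - 1) *
        Real.exp (|η| / nu) * Real.exp (-y ^ 2) := by
  intro y
  obtain ⟨I, hI⟩ : ∃ I, I = ∫ ξ in Set.Ioi y, Real.exp (-ξ ^ 2) := ⟨_, rfl⟩
  obtain ⟨a, ha⟩ : ∃ a, a = Real.exp (η / nu) - 1 := ⟨_, rfl⟩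
  rw [hΓ y, ← ha, ← hI]
  have hint : Integrable (fun ξ : ℝ => Real.exp (-ξ ^ 2)) := by
    have := integrable_exp_neg_mul_sq (b := 1) one_pos
    simpa using this
  have hI0 : 0 ≤ I := by
    rw [hI]
    apply integral_nonneg
    intro x; positivity
  have hItot : I ≤ Real.sqrt Real.pi := by
    have h1 : I ≤ ∫ ξ : ℝ, Real.exp (-ξ ^ 2) := by
      rw [hI]
      apply setIntegral_le_integral hint
      filter_upwards with x using by positivity
    have h2 : (∫ ξ : ℝ, Real.exp (-ξ ^ 2)) = Real.sqrt Real.pi := by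
      have := integral_gaussian (1 : ℝ)
      simpa using this
    linarith
  -- basic exponential inequalities
  have hdle : η / nu ≤ |η| / nu := by
    apply div_le_div_of_nonneg_right (le_abs_self η) hnu.le
  have hdge : -(|η| / nu) ≤ η / nu := by
    rw [neg_le]
    calc -(η / nu) = -η / nu := by ring
    _ ≤ |η| / nu := div_le_div_of_nonneg_right (neg_le_abs η) hnu.le
  have hE1 : Real.exp (η / nu) ≤ Real.exp (|η| / nu) := Real.exp_le_exp.mpr hdle
  have hE2 : Real.exp (-(|η| / nu)) ≤ Real.exp (η / nu) := Real.exp_le_exp.mpr hdge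
  have hEprod : Real.exp (|η| / nu) * Real.exp (-(|η| / nu)) = 1 := by
    rw [← Real.exp_add, add_neg_cancel, Real.exp_zero]
  have hE3 : 1 ≤ Real.exp (|η| / nu) := Real.one_le_exp (by positivity)
  have hE4 : 0 < Real.exp (-(|η| / nu)) := Real.exp_pos _
  have hE5 : Real.exp (-(|η| / nu)) ≤ 1 := Real.exp_le_one_iff.mpr (by
    simp only [neg_nonpos]; positivity)
  have habs : |a| ≤ Real.exp (|η| / nu) - 1 := by
    rw [abs_le, ha]
    constructor
    · -- -(exp(|η|/nu) - 1) ≤ exp(η/nu) - 1, i.e. 1 - exp(|η|/nu) ≤ exp(η/nu) - 1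
      -- from exp(-|η|/nu) ≤ exp(η/nu) and exp(t)+exp(-t) ≥ 2
      nlinarith [Real.exp_pos (|η| / nu)]
    · linarith
  have hsp : 0 < Real.sqrt Real.pi := Real.sqrt_pos.mpr Real.pi_pos
  have hDlb : Real.sqrt Real.pi * Real.exp (-(|η| / nu)) ≤ Real.sqrt Real.pi + a * I := by
    rcases le_or_gt 0 a with h | h
    · nlinarith [mul_nonneg h hI0]
    · have h1 : a * Real.sqrt Real.pi ≤ a * I := by nlinarith
      have h2 : Real.sqrt Real.pi * Real.exp (-(|η| / nu)) ≤
          Real.sqrt Real.pi * Real.exp (η / nu) := by nlinarith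
      have heq : Real.sqrt Real.pi * Real.exp (η / nu) =
          Real.sqrt Real.pi + a * Real.sqrt Real.pi := by rw [ha]; ring
      linarith
  have hDpos : 0 < Real.sqrt Real.pi + a * I := by nlinarith
  rw [abs_div, abs_of_pos hDpos, abs_mul, abs_of_pos (Real.exp_pos _),
    div_le_iff₀ hDpos]
  have hrpow : Real.pi ^ (-(1 : ℝ) / 2) = (Real.sqrt Real.pi)⁻¹ := by
    rw [show (-(1 : ℝ) / 2) = -(1 / 2) by ring, Real.rpow_neg Real.pi_pos.le,
      ← Real.sqrt_eq_rpow]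
  rw [hrpow]
  have key : |a| * Real.exp (-y ^ 2) ≤
      ((Real.sqrt Real.pi)⁻¹ * (Real.exp (|η| / nu) - 1) * Real.exp (|η| / nu) *
        Real.exp (-y ^ 2)) * (Real.sqrt Real.pi * Real.exp (-(|η| / nu))) := by
    have hsimp : ((Real.sqrt Real.pi)⁻¹ * (Real.exp (|η| / nu) - 1) * Real.exp (|η| / nu) *
        Real.exp (-y ^ 2)) * (Real.sqrt Real.pi * Real.exp (-(|η| / nu))) =
        (Real.exp (|η| / nu) - 1) * Real.exp (-y ^ 2) *
          (Real.exp (|η| / nu) * Real.exp (-(|η| / nu))) := by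
      field_simp
    rw [hsimp, hEprod, mul_one]
    have := Real.exp_pos (-y ^ 2)
    nlinarith
  calc |a| * Real.exp (-y ^ 2)
      ≤ ((Real.sqrt Real.pi)⁻¹ * (Real.exp (|η| / nu) - 1) * Real.exp (|η| / nu) *
        Real.exp (-y ^ 2)) * (Real.sqrt Real.pi * Real.exp (-(|η| / nu))) := key
    _ ≤ _ := by
        apply mul_le_mul_of_nonneg_left hDlb
        have h1 : 0 ≤ Real.exp (|η| / nu) - 1 := by linarith
        positivity
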